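/- Let h₁,h₂ > 0 and ψ(P₁,P₂) = ρ(P₁,P₂)/φ₂(P₂) = (1+h₁P₁+h₂P₂)/((1+P₁)(1+h₂P₂)). The partial derivative of ψ with respect to P₂ is negative for all P₁ > 0 and P₂ ≥ 0; equivalently, the function P₂ ↦ g(P₁) - g(h₁P₁/(1+h₂P₂)) is strictly increasing in P₂ for fixed P₁ > 0. -/

import Mathlib

noncomputable def g (x : ℝ) : ℝ := (1/2) * Real.log (1 + x)

noncomputable def ψ (h₁ h₂ P₁ P₂ : ℝ) : ℝ :=
  (1 + h₁ * P₁ + h₂ * P₂) / ((1 + P₁) * (1 + h₂ * P₂))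

theorem stmt_9 (h₁ h₂ P₁ : ℝ) (hh₁ : 0 < h₁) (hh₂ : 0 < h₂) (hP₁ : 0 < P₁) :
    (∀ P₂ : ℝ, 0 ≤ P₂ →
      HasDerivAt (fun t => ψ h₁ h₂ P₁ t)
        (-(h₁ * h₂ * P₁) / ((1 + P₁) * (1 + h₂ * P₂) ^ 2)) P₂ ∧
      -(h₁ * h₂ * P₁) / ((1 + P₁) * (1 + h₂ * P₂) ^ 2) < 0) ∧
    StrictMonoOn (fun P₂ => g P₁ - g (h₁ * P₁ / (1 + h₂ * P₂))) (Set.Ici 0) := by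
  have hP1 : (0:ℝ) < 1 + P₁ := by linarith
  constructor
  · intro P₂ hP₂
    have hden : (0:ℝ) < 1 + h₂ * P₂ := by nlinarith
    have hg : (1 + P₁) * (1 + h₂ * P₂) ≠ 0 := by positivity
    constructor
    · have hf : HasDerivAt (fun t : ℝ => 1 + h₁ * P₁ + h₂ * t) h₂ P₂ := by
        simpa using ((hasDerivAt_id P₂).const_mul h₂).const_add (1 + h₁ * P₁)
      have hgd : HasDerivAt (fun t : ℝ => (1 + P₁) * (1 + h₂ * t)) ((1 + P₁) * h₂) P₂ := by
        simpa using (((hasDerivAt_id P₂).const_mul h₂).const_add 1).const_mul (1 + P₁)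
      have : HasDerivAt (fun t : ℝ => (1 + h₁ * P₁ + h₂ * t) / ((1 + P₁) * (1 + h₂ * t))) _ P₂ := hf.div hgd hg
      convert this using 1
      · rfl
      field_simp
      ring
    · apply div_neg_of_neg_of_pos
      · have : 0 < h₁ * h₂ * P₁ := by positivity
        linarith
      · positivity
  · intro a ha b hb hab
    simp only [Set.mem_Ici] at ha hb
    have hda : (0:ℝ) < 1 + h₂ * a := by nlinarith
    have hdb : (0:ℝ) < 1 + h₂ * b := by nlinarith
    have hxa : (0:ℝ) < h₁ * P₁ / (1 + h₂ * a) := by positivity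
    have hxb : (0:ℝ) < h₁ * P₁ / (1 + h₂ * b) := by positivity
    have hlt : h₁ * P₁ / (1 + h₂ * b) < h₁ * P₁ / (1 + h₂ * a) := by
      apply div_lt_div_of_pos_left (by positivity) hda
      nlinarith
    have : g (h₁ * P₁ / (1 + h₂ * b)) < g (h₁ * P₁ / (1 + h₂ * a)) := by
      unfold g
      have := Real.log_lt_log (by linarith) (by linarith : 1 + h₁ * P₁ / (1 + h₂ * b) < 1 + h₁ * P₁ / (1 + h₂ * a))
      linarith
    simp only
    linarith
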